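/- In dimension 1, the traffic rule (CA rule 184) preserves archipelagos: if x ∈ {0,1}^{Z/nZ} is a q-archipelago (q ∈ {0,1}), then F₁₈₄(x) is also a q-archipelago. -/
import Mathlib


/-- The traffic rule (elementary CA rule 184) on `ℤ/nℤ`:
`F(x)_i = 1` iff (`x_{i-1} = 1` and `x_i = 0`) or (`x_i = 1` and `x_{i+1} = 1`). -/
def F184 {n : ℕ} (x : ZMod n → Bool) : ZMod n → Bool :=
  fun i => (x (i - 1) && !x i) || (x i && x (i + 1))

/-- rule 184 preserves `q`-archipelagos: if no two (cyclically)
consecutive cells of `x` are both in state `q`, the same holds for `F₁₈₄(x)`. -/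
theorem F184_preserves_archipelagos
    (n : ℕ) [NeZero n] (q : Bool) (x : ZMod n → Bool)
    (hx : ∀ i : ZMod n, ¬(x i = q ∧ x (i + 1) = q)) :
    ∀ i : ZMod n, ¬(F184 x i = q ∧ F184 x (i + 1) = q) := by
  intro i h
  obtain ⟨h1, h2⟩ := h
  have H1 := hx (i - 1)
  have H2 := hx i
  have H3 := hx (i + 1)
  simp only [F184, sub_add_cancel, add_sub_cancel_right] at *
  clear hx
  revert H1 H2 H3 h1 h2
  generalize x (i - 1) = a
  generalize x i = b
  generalize x (i + 1) = c
  generalize x (i + 1 + 1) = d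
  revert q a b c d
  decide
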